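/- For any $d$ sets of points placed as $\lfloor n/d \rfloor$ equally spaced points on $d$ parallel lines through the vertices of a $(d-1)$-dimensional simplex in $\mathbb{R}^d$, the number of distinct volumes of full-dimensional simplices spanned by the resulting point set is at most $\lfloor (n-1)/d \rfloor$. -/

import Mathlib

/-- The matrix whose first `d` rows are `(1, v i)` and last row `(0, u)`. -/
noncomputable def baseMat (d : ℕ) (v : Fin d → Fin d → ℝ) (u : Fin d → ℝ) :
    Matrix (Fin (d+1)) (Fin (d+1)) ℝ :=
  Matrix.of fun i => Fin.lastCases (Fin.cons 0 u) (fun i' => Fin.cons 1 (v i')) i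

lemma det_edge_eq_det_cons (d : ℕ) (p : Fin (d+1) → Fin d → ℝ) :
    Matrix.det (Matrix.of fun i : Fin d => p i.succ - p 0) =
      Matrix.det (Matrix.of fun i : Fin (d+1) => (Fin.cons 1 (p i) : Fin (d+1) → ℝ)) := by
  set M : Matrix (Fin (d+1)) (Fin (d+1)) ℝ :=
    Matrix.of fun i : Fin (d+1) => (Fin.cons 1 (p i) : Fin (d+1) → ℝ) with hM
  set c : Fin (d+1) → ℝ := fun i => if i = 0 then 0 else -1 with hc
  set A : Matrix (Fin (d+1)) (Fin (d+1)) ℝ :=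
    Matrix.of fun i x => M i x + c i * M 0 x with hA
  have h1 : A.det = M.det :=
    Matrix.det_eq_of_forall_row_eq_smul_add_const c 0 (by simp [hc]) (fun i x => rfl)
  rw [← h1, Matrix.det_succ_column_zero]
  rw [Finset.sum_eq_single 0]
  · have : A.submatrix (Fin.succAbove 0) Fin.succ =
        Matrix.of fun i : Fin d => p i.succ - p 0 := by
      ext i x
      simp [hA, hc, hM, Fin.succ_ne_zero, Fin.succAbove_zero, Fin.cons_succ]
      ring
    rw [this]
    simp [hA, hc, hM, Fin.cons_zero]
  · intro i _ hi
    simp [hA, hc, hM, hi, Fin.cons_zero]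
  · simp

/-- The `d`-volume of the simplex with vertices `p 0, …, p d` in `ℝᵈ`. -/
noncomputable def simplexVol (d : ℕ) (p : Fin (d + 1) → (Fin d → ℝ)) : ℝ :=
  |Matrix.det (Matrix.of fun i : Fin d => p i.succ - p 0)| / (Nat.factorial d)

lemma key (d m : ℕ) (v : Fin d → Fin d → ℝ) (u : Fin d → ℝ)
    (p : Fin (d+1) → Fin d → ℝ)
    (a : Fin (d+1) → Fin d) (j : Fin (d+1) → ℕ)
    (hj : ∀ i, j i < m) (hp : ∀ i, p i = v (a i) + (j i : ℝ) • u)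
    (hinj : Function.Injective p) (ht : simplexVol d p ≠ 0) :
    ∃ k : ℕ, 1 ≤ k ∧ k ≤ m - 1 ∧
      simplexVol d p = (k : ℝ) * |Matrix.det (baseMat d v u)| / (d.factorial) := by
  classical
  obtain ⟨s, s', hss, haa⟩ := Fintype.exists_ne_map_eq_of_card_lt a (by simp)
  set M : Matrix (Fin (d+1)) (Fin (d+1)) ℝ :=
    Matrix.of fun i : Fin (d+1) => (Fin.cons 1 (p i) : Fin (d+1) → ℝ) with hMdef
  set c : ℝ := (j s' : ℝ) - (j s : ℝ) with hcdef
  have hrow : (Fin.cons 1 (p s') : Fin (d+1) → ℝ)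
      = (Fin.cons 1 (p s) : Fin (d+1) → ℝ) + c • (Fin.cons 0 u : Fin (d+1) → ℝ) := by
    funext x
    refine Fin.cases ?_ (fun x' => ?_) x
    · simp
    · simp only [Pi.add_apply, Pi.smul_apply, Fin.cons_succ, smul_eq_mul]
      rw [hp s', hp s, haa]
      simp [hcdef]
      ring
  set N : Matrix (Fin (d+1)) (Fin (d+1)) ℝ :=
    M.updateRow s' (Fin.cons 0 u) with hNdef
  have hMN : M.det = c * N.det := by
    conv_lhs => rw [← Matrix.updateRow_eq_self M s']
    have : M s' = (Fin.cons 1 (p s) : Fin (d+1) → ℝ) + c • (Fin.cons 0 u : Fin (d+1) → ℝ) := by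
      simp only [hMdef, Matrix.of_apply]; exact hrow
    rw [this, Matrix.det_updateRow_add, Matrix.det_updateRow_smul]
    have hz : (M.updateRow s' (Fin.cons 1 (p s))).det = 0 := by
      apply Matrix.det_zero_of_row_eq hss
      rw [Matrix.updateRow_ne hss, Matrix.updateRow_self]
      rfl
    rw [hz, zero_add]
  set B : Matrix (Fin (d+1)) (Fin (d+1)) ℝ :=
    Matrix.of fun i => if i = s' then (Fin.cons 0 u : Fin (d+1) → ℝ)
      else (Fin.cons 1 (v (a i)) : Fin (d+1) → ℝ) with hBdef
  have hNB : N.det = B.det := by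
    apply Matrix.det_eq_of_forall_row_eq_smul_add_const
      (fun i => if i = s' then 0 else (j i : ℝ)) s' (by simp)
    intro i x
    by_cases hi : i = s'
    · subst hi
      simp [hNdef, hBdef]
    · simp only [hNdef, hBdef, Matrix.updateRow_ne hi, if_neg hi, if_pos rfl,
        hMdef, Matrix.of_apply]
      refine Fin.cases ?_ (fun x' => ?_) x
      · simp
      · simp only [Fin.cons_succ]
        rw [hp i]
        simp
  have hdet : M.det ≠ 0 := by
    intro h
    apply ht
    unfold simplexVol
    rw [det_edge_eq_det_cons, ← hMdef, h]
    simp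
  have hBne : B.det ≠ 0 := by
    intro h; exact hdet (by rw [hMN, hNB, h, mul_zero])
  have hcne : c ≠ 0 := by
    intro h; exact hdet (by rw [hMN, h, zero_mul])
  -- injectivity of a away from s'
  have hainj : ∀ i₁ i₂, i₁ ≠ s' → i₂ ≠ s' → a i₁ = a i₂ → i₁ = i₂ := by
    intro i₁ i₂ h1 h2 h12
    by_contra hne
    apply hBne
    apply Matrix.det_zero_of_row_eq hne
    funext x
    simp only [hBdef, Matrix.of_apply, if_neg h1, if_neg h2, h12]
  set σ : Fin (d+1) → Fin (d+1) :=
    fun i => if i = s' then Fin.last d else (a i).castSucc with hσdef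
  have hσinj : Function.Injective σ := by
    intro i₁ i₂ h
    simp only [hσdef] at h
    by_cases h1 : i₁ = s' <;> by_cases h2 : i₂ = s'
    · rw [h1, h2]
    · rw [if_pos h1, if_neg h2] at h
      exact absurd h.symm (ne_of_lt (Fin.castSucc_lt_last _))
    · rw [if_neg h1, if_pos h2] at h
      exact absurd h (ne_of_lt (Fin.castSucc_lt_last _))
    · rw [if_neg h1, if_neg h2] at h
      exact hainj _ _ h1 h2 (Fin.castSucc_injective _ h)
  set e : Equiv.Perm (Fin (d+1)) :=
    Equiv.ofBijective σ (Finite.injective_iff_bijective.mp hσinj) with hedef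
  have hBsub : B = (baseMat d v u).submatrix e id := by
    ext i x
    have he : e i = σ i := rfl
    simp only [Matrix.submatrix_apply, he, id, hσdef, hBdef, Matrix.of_apply, baseMat]
    by_cases hi : i = s'
    · rw [if_pos hi, if_pos hi, Fin.lastCases_last]
    · rw [if_neg hi, if_neg hi, Fin.lastCases_castSucc]
  have habs : |B.det| = |(baseMat d v u).det| := by
    rw [hBsub, Matrix.det_permute]
    rcases Int.units_eq_one_or (Equiv.Perm.sign e) with h | h <;> rw [h] <;>
      simp [abs_mul]
  -- the integer gap
  have hjne : j s ≠ j s' := by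
    intro h
    apply hss
    apply hinj
    rw [hp s, hp s', haa, h]
  refine ⟨max (j s) (j s') - min (j s) (j s'), by omega, by have := hj s; have := hj s'; omega, ?_⟩
  have hck : |c| = ((max (j s) (j s') - min (j s) (j s') : ℕ) : ℝ) := by
    rcases le_total (j s) (j s') with h | h
    · rw [max_eq_right h, min_eq_left h, Nat.cast_sub h, hcdef,
        abs_of_nonneg (by simp [sub_nonneg]; exact_mod_cast h)]
    · rw [max_eq_left h, min_eq_right h, Nat.cast_sub h, hcdef, abs_sub_comm,
        abs_of_nonneg (by simp [sub_nonneg]; exact_mod_cast h)]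
  unfold simplexVol
  rw [det_edge_eq_det_cons, ← hMdef, hMN, hNB, abs_mul, hck, habs]

/-- placing `⌊n/d⌋` equally spaced points on `d` parallel lines
through the vertices of a nondegenerate `(d-1)`-simplex yields a point set whose
full-dimensional simplices have at most `⌊(n-1)/d⌋` distinct volumes. -/
theorem stmt8 (d : ℕ) (hd : 1 ≤ d) (n : ℕ)
    (v : Fin d → (Fin d → ℝ)) (hv : AffineIndependent ℝ v)
    (u : Fin d → ℝ) (hu : u ∉ (affineSpan ℝ (Set.range v)).direction)
    (S : Set (Fin d → ℝ))
    (hS : S = {x | ∃ (i : Fin d) (j : ℕ), j < n / d ∧ x = v i + (j : ℝ) • u}) :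
    {t : ℝ | t ≠ 0 ∧ ∃ p : Fin (d + 1) → (Fin d → ℝ), (∀ i, p i ∈ S) ∧
        Function.Injective p ∧ simplexVol d p = t}.ncard ≤ (n - 1) / d := by
  classical
  subst hS
  set g : ℕ → ℝ := fun k => (k : ℝ) * |Matrix.det (baseMat d v u)| / (d.factorial) with hg
  have hsub : {t : ℝ | t ≠ 0 ∧ ∃ p : Fin (d + 1) → (Fin d → ℝ),
      (∀ i, p i ∈ {x | ∃ (i : Fin d) (j : ℕ), j < n / d ∧ x = v i + (j : ℝ) • u}) ∧
      Function.Injective p ∧ simplexVol d p = t} ⊆ g '' (Set.Icc 1 (n / d - 1)) := by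
    rintro t ⟨ht0, p, hpS, hpinj, hvol⟩
    have hpS' : ∀ i, ∃ (a : Fin d) (j : ℕ), j < n / d ∧ p i = v a + (j : ℝ) • u := hpS
    choose a j hj hp using hpS'
    obtain ⟨k, hk1, hk2, hk⟩ := key d (n / d) v u p a j hj hp hpinj (by rw [hvol]; exact ht0)
    exact ⟨k, ⟨hk1, hk2⟩, by rw [hg]; rw [← hvol, hk]⟩
  have h1 : (g '' (Set.Icc 1 (n / d - 1))).ncard ≤ (Set.Icc 1 (n / d - 1)).ncard :=
    Set.ncard_image_le (Set.finite_Icc _ _)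
  have h2 : (Set.Icc 1 (n / d - 1) : Set ℕ).ncard = n / d - 1 := by
    rw [← Finset.coe_Icc, Set.ncard_coe_finset, Nat.card_Icc]
    omega
  have h3 : n / d - 1 ≤ (n - 1) / d := by
    rcases Nat.eq_zero_or_pos n with hn | hn
    · simp [hn]
    · have hdd : 0 < d := hd
      have h := Nat.div_le_div_right (c := d) (show n ≤ n - 1 + d by omega)
      rw [Nat.add_div_right _ hdd] at h
      exact Nat.sub_le_of_le_add h
  calc {t : ℝ | t ≠ 0 ∧ ∃ p : Fin (d + 1) → (Fin d → ℝ),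
      (∀ i, p i ∈ {x | ∃ (i : Fin d) (j : ℕ), j < n / d ∧ x = v i + (j : ℝ) • u}) ∧
      Function.Injective p ∧ simplexVol d p = t}.ncard
      ≤ (g '' (Set.Icc 1 (n / d - 1))).ncard :=
        Set.ncard_le_ncard hsub ((Set.finite_Icc _ _).image _)
    _ ≤ n / d - 1 := le_trans h1 (le_of_eq h2)
    _ ≤ (n - 1) / d := h3
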